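/- Let (i_1, …, i_n) be a reduced word, π a path with each Θ_{k−1} α_{i_k}-integral, and let α = α_j be a simple root such that Θ_n is α-integral. Set w = w(n) and μ = π(1). Then min_{t∈[0,1]} w(α)(Υ'_n(π)(t)) = w(α)(μ − Υ_n(π)(1)) − ε_α(Θ_n), where ε_α(Θ_n) = −min α∘Θ_n. -/

import Mathlib

open Set

namespace MVPaper

variable {V : Type*} [AddCommGroup V] [Module ℝ V]

/-- `π` is piecewise linear (affine) on `[0,1]`. -/
def IsPWLinearOn (π : ℝ → V) : Prop :=
  ∃ (n : ℕ) (t : Fin (n + 1) → ℝ), Monotone t ∧ t 0 = 0 ∧ t (Fin.last n) = 1 ∧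
    ∀ i : Fin n, ∃ a b : V, ∀ s ∈ Set.Icc (t i.castSucc) (t i.succ), π s = s • a + b

/-- A path: continuous piecewise linear with `π 0 = 0`. -/
def IsPath (π : ℝ → V) : Prop := π 0 = 0 ∧ IsPWLinearOn π

/-- `t ∈ (0,1)` is a local minimum point of `f`. -/
def IsLocalMinPt (f : ℝ → ℝ) (t : ℝ) : Prop :=
  t ∈ Set.Ioo (0 : ℝ) 1 ∧ ∀ᶠ s in nhds t, f t ≤ f s

/-- `f` takes integer values at `0`, `1` and at local minimum points. -/
def IsIntegralFn (f : ℝ → ℝ) : Prop :=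
  (∃ m : ℤ, f 0 = m) ∧ (∃ m : ℤ, f 1 = m) ∧ ∀ t, IsLocalMinPt f t → ∃ m : ℤ, f t = m

def IsZeroSectionAt (f : ℝ → ℝ) (m a b : ℝ) : Prop :=
  0 ≤ a ∧ a < b ∧ b ≤ 1 ∧ ∀ t ∈ Set.Icc a b, f t = m

def IsPreStableAt (f : ℝ → ℝ) (m a b : ℝ) : Prop :=
  0 ≤ a ∧ a < b ∧ b ≤ 1 ∧ f a = m ∧ f b = m ∧ ∀ t ∈ Set.Ioo a b, m < f t

/-- A stable section: maximal among intervals on which `f` equals `m` at the ends and is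
`> m` inside, for some integer level. -/
def IsStableSectionAt (f : ℝ → ℝ) (m a b : ℝ) : Prop :=
  IsPreStableAt f m a b ∧
    ∀ (m' : ℤ) (a' b' : ℝ), IsPreStableAt f (m' : ℝ) a' b' → a' ≤ a → b ≤ b' →
      a' = a ∧ b' = b

def IsPosDirectedSectionAt (f : ℝ → ℝ) (m a b : ℝ) : Prop :=
  0 ≤ a ∧ a < b ∧ b ≤ 1 ∧ f a = m ∧ f b = m + 1 ∧
    ∀ t ∈ Set.Ioo a b, m < f t ∧ f t < m + 1

def IsNegDirectedSectionAt (f : ℝ → ℝ) (m a b : ℝ) : Prop :=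
  0 ≤ a ∧ a < b ∧ b ≤ 1 ∧ f a = m ∧ f b = m - 1 ∧
    ∀ t ∈ Set.Ioo a b, m - 1 < f t ∧ f t < m

def IsSectionAt (f : ℝ → ℝ) (a b : ℝ) : Prop :=
  ∃ m : ℤ, IsZeroSectionAt f (m : ℝ) a b ∨ IsStableSectionAt f (m : ℝ) a b ∨
    IsPosDirectedSectionAt f (m : ℝ) a b ∨ IsNegDirectedSectionAt f (m : ℝ) a b

/-- `a` and `b` are consecutive elements of the finite set `T`. -/
def Adjacent (T : Finset ℝ) (a b : ℝ) : Prop :=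
  a ∈ T ∧ b ∈ T ∧ a < b ∧ ∀ c ∈ T, c ≤ a ∨ b ≤ c

/-- `T` is a subdivision of `[0,1]` each of whose consecutive intervals is a section of `f`. -/
def IsSectionDecomposition (f : ℝ → ℝ) (T : Finset ℝ) : Prop :=
  (0 : ℝ) ∈ T ∧ (1 : ℝ) ∈ T ∧ (T : Set ℝ) ⊆ Set.Icc 0 1 ∧
    ∀ a b : ℝ, Adjacent T a b → IsSectionAt f a b

def NoTwoConsecutiveZeroSections (f : ℝ → ℝ) (T : Finset ℝ) : Prop :=
  ∀ a b c : ℝ, Adjacent T a b → Adjacent T b c →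
    ¬ ((∃ m : ℤ, IsZeroSectionAt f (m : ℝ) a b) ∧ (∃ m : ℤ, IsZeroSectionAt f (m : ℝ) b c))

/-- `Q_β(π) = min β∘π` on `[0,1]`. -/
noncomputable def Qval (β : V →ₗ[ℝ] ℝ) (π : ℝ → V) : ℝ :=
  sInf ((fun t => β (π t)) '' Set.Icc (0 : ℝ) 1)

/-- The reflection `s_β(v) = v - β(v)β^∨`. -/
def sRefl (β : V →ₗ[ℝ] ℝ) (βv : V) (v : V) : V := v - β v • βv

/-- `q`, the first time the minimum of `β∘π` is attained. -/
noncomputable def qTime (β : V →ₗ[ℝ] ℝ) (π : ℝ → V) : ℝ :=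
  sInf {t | t ∈ Set.Icc (0 : ℝ) 1 ∧ β (π t) = Qval β π}

/-- `y`, the last time before `q` where `β∘π = Q+1`. -/
noncomputable def yTime (β : V →ₗ[ℝ] ℝ) (π : ℝ → V) : ℝ :=
  sSup {t | t ∈ Set.Icc (0 : ℝ) 1 ∧ t < qTime β π ∧ β (π t) = Qval β π + 1}

/-- Littelmann raising operator. -/
noncomputable def eOp (β : V →ₗ[ℝ] ℝ) (βv : V) (π : ℝ → V) : ℝ → V := fun t =>
  if t ≤ yTime β π then π t
  else if t ≤ qTime β π then π (yTime β π) + sRefl β βv (π t - π (yTime β π))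
  else π t + βv

/-- `p`, the last time the minimum of `β∘π` is attained. -/
noncomputable def pTime (β : V →ₗ[ℝ] ℝ) (π : ℝ → V) : ℝ :=
  sSup {t | t ∈ Set.Icc (0 : ℝ) 1 ∧ β (π t) = Qval β π}

/-- `x`, the first time after `p` where `β∘π = Q+1`. -/
noncomputable def xTime (β : V →ₗ[ℝ] ℝ) (π : ℝ → V) : ℝ :=
  sInf {t | t ∈ Set.Icc (0 : ℝ) 1 ∧ pTime β π < t ∧ β (π t) = Qval β π + 1}

/-- Littelmann lowering operator. -/
noncomputable def fOp (β : V →ₗ[ℝ] ℝ) (βv : V) (π : ℝ → V) : ℝ → V := fun t =>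
  if t ≤ pTime β π then π t
  else if t ≤ xTime β π then π (pTime β π) + sRefl β βv (π t - π (pTime β π))
  else π t - βv

noncomputable def phiVal (β : V →ₗ[ℝ] ℝ) (π : ℝ → V) : ℝ := β (π 1) - Qval β π

/-- `e_β^{max}`: iterate `e_β` while `Q_β ≤ -1`, i.e. `ε_β(π)` many times. -/
noncomputable def eMax (β : V →ₗ[ℝ] ℝ) (βv : V) (π : ℝ → V) : ℝ → V :=
  (eOp β βv)^[⌊-(Qval β π)⌋₊] π

/-- `f_β^{max}`: iterate `f_β` while `φ_β ≥ 1`, i.e. `φ_β(π)` many times. -/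
noncomputable def fMax (β : V →ₗ[ℝ] ℝ) (βv : V) (π : ℝ → V) : ℝ → V :=
  (fOp β βv)^[⌊phiVal β π⌋₊] π


variable {I : Type*}

/-- A root generating system for a generalized Cartan matrix. -/
def IsRootGenSystem (α : I → (V →ₗ[ℝ] ℝ)) (αv : I → V) : Prop :=
  LinearIndependent ℝ α ∧ LinearIndependent ℝ αv ∧
  (∀ i, α i (αv i) = 2) ∧
  (∀ i j, i ≠ j → ∃ n : ℤ, n ≤ 0 ∧ α j (αv i) = (n : ℝ)) ∧
  (∀ i j, α j (αv i) = 0 ↔ α i (αv j) = 0)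

/-- The simple reflection `s_i`. -/
def si (α : I → (V →ₗ[ℝ] ℝ)) (αv : I → V) (i : I) : V → V :=
  fun v => v - α i v • αv i

/-- The product `s_{i_1} ∘ ⋯ ∘ s_{i_n}` associated to a word `[i_1, …, i_n]`. -/
def wProd (α : I → (V →ₗ[ℝ] ℝ)) (αv : I → V) (c : List I) : V → V :=
  c.foldr (fun i g => (si α αv i) ∘ g) id

/-- A word is reduced if its Weyl group element cannot be written with fewer generators. -/
def IsReducedWord (α : I → (V →ₗ[ℝ] ℝ)) (αv : I → V) (c : List I) : Prop :=
  ∀ c' : List I, wProd α αv c' = wProd α αv c → c.length ≤ c'.length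

/-- `Θ` for the word `[i_1, …, i_k]`: `f_{α_{i_k}}^{max} ⋯ f_{α_{i_1}}^{max} (π)`. -/
noncomputable def ThetaPath (α : I → (V →ₗ[ℝ] ℝ)) (αv : I → V) (c : List I) (π : ℝ → V) :
    ℝ → V :=
  c.foldl (fun σ i => fMax (α i) (αv i) σ) π

/-- Each `Θ_{k-1}` is `α_{i_k}`-integral. -/
def ThetaIntegral (α : I → (V →ₗ[ℝ] ℝ)) (αv : I → V) (c : List I) (π : ℝ → V) : Prop :=
  ∀ k : Fin c.length,
    IsIntegralFn (fun t => α (c.get k) (ThetaPath α αv (c.take k) π t))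

/-- `Υ_w(π) = w ∘ f_w^{max}(π)`. -/
noncomputable def UpsPath (α : I → (V →ₗ[ℝ] ℝ)) (αv : I → V) (c : List I) (π : ℝ → V) :
    ℝ → V :=
  fun t => wProd α αv c (ThetaPath α αv c π t)

/-- `Υ'_w(π)`, the translate of `Υ_w(π)` ending at `π(1)`. -/
noncomputable def UpsPath' (α : I → (V →ₗ[ℝ] ℝ)) (αv : I → V) (c : List I) (π : ℝ → V) :
    ℝ → V :=
  fun t => UpsPath α αv c π t + (π 1 - UpsPath α αv c π 1)


section Aux

variable {V : Type*} [AddCommGroup V] [Module ℝ V] {I : Type*}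

lemma si_add (α : I → (V →ₗ[ℝ] ℝ)) (αv : I → V) (i : I) (u v : V) :
    si α αv i (u + v) = si α αv i u + si α αv i v := by
  simp only [si, map_add, add_smul]; abel

lemma si_si (α : I → (V →ₗ[ℝ] ℝ)) (αv : I → V) (h2 : ∀ i, α i (αv i) = 2) (i : I) (v : V) :
    si α αv i (si α αv i v) = v := by
  simp only [si, map_sub, map_smul, smul_eq_mul, h2, sub_smul, smul_smul]
  module

lemma wProd_cons (α : I → (V →ₗ[ℝ] ℝ)) (αv : I → V) (i : I) (c : List I) (v : V) :
    wProd α αv (i :: c) v = si α αv i (wProd α αv c v) := rfl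

lemma wProd_append (α : I → (V →ₗ[ℝ] ℝ)) (αv : I → V) (c d : List I) (v : V) :
    wProd α αv (c ++ d) v = wProd α αv c (wProd α αv d v) := by
  induction c with
  | nil => rfl
  | cons i c ih =>
      rw [List.cons_append, wProd_cons, wProd_cons, ih]

lemma wProd_add (α : I → (V →ₗ[ℝ] ℝ)) (αv : I → V) (c : List I) (u v : V) :
    wProd α αv c (u + v) = wProd α αv c u + wProd α αv c v := by
  induction c with
  | nil => rfl
  | cons i c ih => rw [wProd_cons, wProd_cons, wProd_cons, ih, si_add]

lemma wProd_reverse_wProd (α : I → (V →ₗ[ℝ] ℝ)) (αv : I → V)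
    (h2 : ∀ i, α i (αv i) = 2) (c : List I) (v : V) :
    wProd α αv c.reverse (wProd α αv c v) = v := by
  induction c generalizing v with
  | nil => rfl
  | cons i c ih =>
      rw [List.reverse_cons, wProd_append]
      show wProd α αv c.reverse (si α αv i (si α αv i (wProd α αv c v))) = v
      rw [si_si α αv h2, ih]

lemma exists_piece {n : ℕ} (t : Fin (n + 1) → ℝ) (hmono : Monotone t)
    (h0 : t 0 = 0) (h1 : t (Fin.last n) = 1) {s : ℝ} (hs : s ∈ Set.Icc (0 : ℝ) 1) :
    ∃ i : Fin n, s ∈ Set.Icc (t i.castSucc) (t i.succ) := by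
  classical
  have hn : 0 < n := by
    rcases Nat.eq_zero_or_pos n with h | h
    · subst h
      have he : (0 : Fin 1) = Fin.last 0 := rfl
      rw [he, h1] at h0; norm_num at h0
    · exact h
  have hne : (Finset.univ.filter (fun i : Fin (n + 1) => s ≤ t i)).Nonempty :=
    ⟨Fin.last n, by simp [h1, hs.2]⟩
  set i1 := (Finset.univ.filter (fun i : Fin (n + 1) => s ≤ t i)).min' hne with hi1
  have hi1mem : s ≤ t i1 := by
    have := Finset.min'_mem _ hne
    rw [← hi1] at this
    simpa using this
  by_cases h : i1 = 0
  · have hz : (⟨0, hn⟩ : Fin n).castSucc = (0 : Fin (n + 1)) := rfl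
    refine ⟨⟨0, hn⟩, ?_, ?_⟩
    · rw [hz, h0]; exact hs.1
    · have hs0 : s ≤ t 0 := h ▸ hi1mem
      exact hs0.trans (hmono (Fin.zero_le _))
  · obtain ⟨j, hj⟩ := Fin.eq_succ_of_ne_zero h
    refine ⟨j, ?_, hj ▸ hi1mem⟩
    by_contra hlt
    push_neg at hlt
    have hmem : j.castSucc ∈ Finset.univ.filter (fun i : Fin (n + 1) => s ≤ t i) := by
      simp [le_of_lt hlt]
    have hle := Finset.min'_le _ _ hmem
    rw [← hi1, hj] at hle
    exact absurd hle (not_le.mpr Fin.castSucc_lt_succ)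

/-- Boundedness of all linear functionals along a map, on `[0,1]`. -/
def BddOnUnit (g : ℝ → V) : Prop :=
  ∀ γ : V →ₗ[ℝ] ℝ, ∃ C : ℝ, ∀ u ∈ Set.Icc (0 : ℝ) 1, |γ (g u)| ≤ C

lemma bddOnUnit_of_path {π : ℝ → V} (hπ : IsPath π) : BddOnUnit π := by
  obtain ⟨-, n, t, hmono, h0, h1, hpieces⟩ := hπ
  intro γ
  choose a b hab using hpieces
  have hn : 0 < n := by
    rcases Nat.eq_zero_or_pos n with h | h
    · subst h
      have he : (0 : Fin 1) = Fin.last 0 := rfl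
      rw [he, h1] at h0; norm_num at h0
    · exact h
  have hne : (Finset.univ : Finset (Fin n)).Nonempty := ⟨⟨0, hn⟩, Finset.mem_univ _⟩
  refine ⟨Finset.univ.sup' hne (fun i => |γ (a i)| + |γ (b i)|), fun u hu => ?_⟩
  obtain ⟨i, hi⟩ := exists_piece t hmono h0 h1 hu
  have hval : π u = u • a i + b i := hab i u hi
  have h01 : |u| ≤ 1 := by
    rw [abs_le]; exact ⟨by linarith [hu.1], hu.2⟩
  have : |γ (π u)| ≤ |γ (a i)| + |γ (b i)| := by
    rw [hval, map_add, map_smul, smul_eq_mul]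
    calc |u * γ (a i) + γ (b i)| ≤ |u * γ (a i)| + |γ (b i)| := abs_add_le _ _
      _ ≤ |γ (a i)| + |γ (b i)| := by
          rw [abs_mul]
          nlinarith [abs_nonneg (γ (a i)), abs_nonneg u]
  exact this.trans (Finset.le_sup' (fun i => |γ (a i)| + |γ (b i)|) (Finset.mem_univ i))

lemma pTime_mem (β : V →ₗ[ℝ] ℝ) (g : ℝ → V) : pTime β g ∈ Set.Icc (0 : ℝ) 1 := by
  unfold pTime
  set S := {u | u ∈ Set.Icc (0 : ℝ) 1 ∧ β (g u) = Qval β g} with hS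
  rcases S.eq_empty_or_nonempty with h | h
  · rw [h, Real.sSup_empty]; exact ⟨le_refl _, zero_le_one⟩
  · obtain ⟨x, hx⟩ := h
    constructor
    · exact le_trans hx.1.1 (le_csSup ⟨1, fun y hy => hy.1.2⟩ hx)
    · exact csSup_le ⟨x, hx⟩ fun y hy => hy.1.2

lemma bddOnUnit_fOp (β : V →ₗ[ℝ] ℝ) (βv : V) {g : ℝ → V} (hg : BddOnUnit g) :
    BddOnUnit (fOp β βv g) := by
  intro γ
  obtain ⟨Cγ, hCγ⟩ := hg γ
  obtain ⟨Cβ, hCβ⟩ := hg β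
  have h01 : (0 : ℝ) ∈ Set.Icc (0 : ℝ) 1 := ⟨le_refl _, zero_le_one⟩
  have hCγ0 : 0 ≤ Cγ := le_trans (abs_nonneg _) (hCγ 0 h01)
  have hCβ0 : 0 ≤ Cβ := le_trans (abs_nonneg _) (hCβ 0 h01)
  have hp := pTime_mem β g
  refine ⟨Cγ + 2 * Cβ * |γ βv| + |γ βv|, fun u hu => ?_⟩
  have h1 := hCγ u hu
  have h2 := hCβ u hu
  have h3 := hCγ _ hp
  have h4 := hCβ _ hp
  have hγ0 : 0 ≤ |γ βv| := abs_nonneg _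
  unfold fOp
  split_ifs with hc1 hc2
  · nlinarith
  · have hexp : γ (g (pTime β g) + sRefl β βv (g u - g (pTime β g)))
        = γ (g u) - (β (g u) - β (g (pTime β g))) * γ βv := by
      simp only [sRefl, map_add, map_sub, map_smul, smul_eq_mul]
      ring
    rw [hexp]
    calc |γ (g u) - (β (g u) - β (g (pTime β g))) * γ βv|
        ≤ |γ (g u)| + |β (g u) - β (g (pTime β g))| * |γ βv| := by
          rw [← abs_mul]; exact abs_sub _ _
      _ ≤ Cγ + 2 * Cβ * |γ βv| + |γ βv| := by
          have : |β (g u) - β (g (pTime β g))| ≤ 2 * Cβ := by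
            calc |β (g u) - β (g (pTime β g))|
                ≤ |β (g u)| + |β (g (pTime β g))| := abs_sub _ _
              _ ≤ 2 * Cβ := by linarith
          nlinarith
  · rw [map_sub]
    calc |γ (g u) - γ βv| ≤ |γ (g u)| + |γ βv| := abs_sub _ _
      _ ≤ Cγ + 2 * Cβ * |γ βv| + |γ βv| := by nlinarith

lemma bddOnUnit_fOp_iter (β : V →ₗ[ℝ] ℝ) (βv : V) {g : ℝ → V} (hg : BddOnUnit g) (k : ℕ) :
    BddOnUnit ((fOp β βv)^[k] g) := by
  induction k with
  | zero => exact hg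
  | succ k ih => rw [Function.iterate_succ_apply']; exact bddOnUnit_fOp β βv ih

lemma bddOnUnit_fMax (β : V →ₗ[ℝ] ℝ) (βv : V) {g : ℝ → V} (hg : BddOnUnit g) :
    BddOnUnit (fMax β βv g) := bddOnUnit_fOp_iter β βv hg _

lemma bddOnUnit_theta (α : I → (V →ₗ[ℝ] ℝ)) (αv : I → V) (c : List I) {π : ℝ → V}
    (hπ : BddOnUnit π) : BddOnUnit (ThetaPath α αv c π) := by
  induction c generalizing π with
  | nil => exact hπ
  | cons i c ih =>
      show BddOnUnit (ThetaPath α αv c (fMax (α i) (αv i) π))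
      exact ih (bddOnUnit_fMax _ _ hπ)

end Aux

/-- The minimum of `w(α)` along `Υ'_w(π)` equals
`w(α)(μ − Υ_w(π)(1)) − ε_α(Θ_w)`, where `w(α)(v) = α(w⁻¹ v)` and `μ = π(1)`. -/
theorem min_of_upsPath' {V : Type*} [AddCommGroup V] [Module ℝ V]
    [FiniteDimensional ℝ V] {I : Type*} [Fintype I]
    (α : I → (V →ₗ[ℝ] ℝ)) (αv : I → V) (hrs : IsRootGenSystem α αv)
    (w : List I) (hred : IsReducedWord α αv w)
    (π : ℝ → V) (hπ : IsPath π) (hint : ThetaIntegral α αv w π)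
    (j : I) (hj : IsIntegralFn (fun t => α j (ThetaPath α αv w π t))) :
    sInf ((fun t => α j (wProd α αv w.reverse (UpsPath' α αv w π t))) '' Set.Icc (0 : ℝ) 1)
      = α j (wProd α αv w.reverse (π 1 - UpsPath α αv w π 1))
        + Qval (α j) (ThetaPath α αv w π) := by
  have h2 : ∀ i, α i (αv i) = 2 := hrs.2.2.1
  set Θ : ℝ → V := ThetaPath α αv w π with hΘ
  set K : ℝ := α j (wProd α αv w.reverse (π 1 - UpsPath α αv w π 1)) with hK
  have hfun : ∀ t : ℝ, α j (wProd α αv w.reverse (UpsPath' α αv w π t))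
      = α j (Θ t) + K := by
    intro t
    have : UpsPath' α αv w π t = wProd α αv w (Θ t) + (π 1 - UpsPath α αv w π 1) := rfl
    rw [this, wProd_add, wProd_reverse_wProd α αv h2, map_add]
  have himg : ((fun t => α j (wProd α αv w.reverse (UpsPath' α αv w π t))) ''
        Set.Icc (0 : ℝ) 1)
      = (fun x => x + K) '' ((fun t => α j (Θ t)) '' Set.Icc (0 : ℝ) 1) := by
    rw [Set.image_image]
    exact Set.image_congr fun t _ => hfun t
  have hne : ((fun t => α j (Θ t)) '' Set.Icc (0 : ℝ) 1).Nonempty :=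
    ⟨α j (Θ 0), ⟨0, ⟨le_refl _, zero_le_one⟩, rfl⟩⟩
  have hbdd : BddBelow ((fun t => α j (Θ t)) '' Set.Icc (0 : ℝ) 1) := by
    obtain ⟨C, hC⟩ := bddOnUnit_theta α αv w (bddOnUnit_of_path hπ) (α j)
    refine ⟨-C, fun x hx => ?_⟩
    obtain ⟨t, ht, rfl⟩ := hx
    have := hC t ht
    have := abs_le.mp this
    linarith [this.1]
  have hiso := (OrderIso.addRight K).map_csInf' hne hbdd
  have heq : ⇑(OrderIso.addRight K) = fun x : ℝ => x + K := rfl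
  rw [himg, ← heq, ← hiso, OrderIso.addRight_apply, add_comm]
  rfl

end MVPaper
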